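/- arXiv:2004.10917 — 2 statements merged into one kernel-verified Lean document; each statement's English description precedes it below -/
import Mathlib

section
/- Let k ≥ 4 and let G be a graph containing a 3-cycle uvw with deg_G(u) = deg_G(v) = k−1. Then the subgraph induced by {u,v,w} is ({K4-minus-an-edge}, k)-boundary-reducible with boundary {w}. -/
open Finset

/-- A proper coloring of `G` from the lists `L`. -/
def IsProperListColoring {V : Type} (G : SimpleGraph V) (L : V → Finset ℕ) (φ : V → ℕ) : Prop :=
  (∀ v, φ v ∈ L v) ∧ ∀ ⦃u v : V⦄, G.Adj u v → φ u ≠ φ v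

/-- `G` is weighted `ε`-flexible for lists of size `k`. -/
def WeightedFlexible {V : Type} [Fintype V] (G : SimpleGraph V) (k : ℕ) (ε : ℝ) : Prop :=
  ∀ L : V → Finset ℕ, (∀ v, k ≤ (L v).card) →
    ∀ w : V → ℕ → ℝ, (∀ v c, 0 ≤ w v c) → (∀ v c, c ∉ L v → w v c = 0) →
      ∃ φ : V → ℕ, IsProperListColoring G L φ ∧
        ε * (∑ v, ∑ c ∈ L v, w v c) ≤ ∑ v, w v (φ v)

/-- `G` is weakly `ε`-flexible for lists of size `k`. -/
def WeaklyFlexible {V : Type} [Fintype V] (G : SimpleGraph V) (k : ℕ) (ε : ℝ) : Prop :=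
  ∀ L : V → Finset ℕ, (∀ v, k ≤ (L v).card) →
    ∀ r : V → ℕ, (∀ v, r v ∈ L v) →
      ∃ φ : V → ℕ, IsProperListColoring G L φ ∧
        ε * (Fintype.card V : ℝ) ≤ ((Finset.univ.filter fun v => φ v = r v).card : ℝ)

/-- `G` has a drawing in the plane: vertices go to distinct points, edges to simple
continuous arcs joining their endpoints, arcs internally avoid vertices and each other. -/
def HasPlanarEmbedding {V : Type} (G : SimpleGraph V) : Prop :=
  ∃ (pos : V → ℝ × ℝ) (γ : Sym2 V → ℝ → ℝ × ℝ),
    Function.Injective pos ∧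
    (∀ e ∈ G.edgeSet, ContinuousOn (γ e) (Set.Icc 0 1)) ∧
    (∀ e ∈ G.edgeSet, Set.InjOn (γ e) (Set.Icc 0 1)) ∧
    (∀ u v : V, G.Adj u v → ({γ s(u, v) 0, γ s(u, v) 1} : Set (ℝ × ℝ)) = {pos u, pos v}) ∧
    (∀ e ∈ G.edgeSet, ∀ t ∈ Set.Ioo (0 : ℝ) 1, γ e t ∉ Set.range pos) ∧
    (∀ e ∈ G.edgeSet, ∀ f ∈ G.edgeSet, e ≠ f →
      ∀ s ∈ Set.Ioo (0 : ℝ) 1, ∀ t ∈ Set.Ioo (0 : ℝ) 1, γ e s ≠ γ f t)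

/-- `G` contains a copy of the graph `p.2` as a (not necessarily induced) subgraph. -/
def ContainsCopy {V : Type} (G : SimpleGraph V) (p : (W : Type) × SimpleGraph W) : Prop :=
  ∃ f : p.2 →g G, Function.Injective f

/-- `K₄` minus an edge (the diamond). -/
def diamondGraph : SimpleGraph (Fin 4) :=
  SimpleGraph.fromEdgeSet {s(0, 1), s(0, 2), s(0, 3), s(1, 2), s(1, 3)}

/-- The house: a `3`-cycle `0 1 4` and a `4`-cycle `0 1 2 3` sharing the edge `01`. -/
def houseGraph : SimpleGraph (Fin 5) :=
  SimpleGraph.fromEdgeSet {s(0, 1), s(1, 2), s(2, 3), s(3, 0), s(0, 4), s(1, 4)}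

/-- Two triangles sharing exactly one vertex. -/
def bowtieGraph : SimpleGraph (Fin 5) :=
  SimpleGraph.fromEdgeSet {s(0, 1), s(1, 2), s(0, 2), s(0, 3), s(3, 4), s(0, 4)}

/-- Two disjoint triangles joined by an edge. -/
def twoTrianglesEdgeGraph : SimpleGraph (Fin 6) :=
  SimpleGraph.fromEdgeSet {s(0, 1), s(1, 2), s(0, 2), s(3, 4), s(4, 5), s(3, 5), s(0, 3)}

def IsTriangle {V : Type} (G : SimpleGraph V) (a b c : V) : Prop :=
  G.Adj a b ∧ G.Adj b c ∧ G.Adj a c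

/-- Any two distinct `3`-cycles of `G` are at distance at least `2`. -/
def TrianglesFarApart {V : Type} (G : SimpleGraph V) : Prop :=
  ∀ a b c a' b' c' : V, IsTriangle G a b c → IsTriangle G a' b' c' →
    ({a, b, c} : Set V) ≠ ({a', b', c'} : Set V) →
    ∀ x ∈ ({a, b, c} : Set V), ∀ y ∈ ({a', b', c'} : Set V), x ≠ y ∧ ¬ G.Adj x y

/-- Every nonempty (induced) subgraph of `G` has a vertex of degree at most `d`. -/
def Degenerate {V : Type} (G : SimpleGraph V) [DecidableRel G.Adj] (d : ℕ) : Prop :=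
  ∀ S : Finset V, S.Nonempty → ∃ v ∈ S, (S.filter fun w => G.Adj v w).card ≤ d

/-- The degree of `v` into the set `A`. -/
def degIn {V : Type} (G : SimpleGraph V) [DecidableRel G.Adj] (A : Finset V) (v : V) : ℕ :=
  (A.filter fun w => G.Adj v w).card

/-- The graph induced by `G` on `T` is colorable from every list assignment
with list sizes at least `f`. -/
def ColorableOn {V : Type} (G : SimpleGraph V) (T : Finset V) (f : V → ℤ) : Prop :=
  ∀ L : V → Finset ℕ, (∀ v ∈ T, f v ≤ ((L v).card : ℤ)) →
    ∃ φ : V → ℕ, (∀ v ∈ T, φ v ∈ L v) ∧ ∀ u ∈ T, ∀ v ∈ T, G.Adj u v → φ u ≠ φ v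

/-- The subgraph of `G` induced on `S`, together with one additional vertex
adjacent exactly to the vertices of `I`. -/
def apexGraph {V : Type} (G : SimpleGraph V) (S I : Finset V) :
    SimpleGraph ({x // x ∈ S} ⊕ Unit) where
  Adj x y :=
    match x, y with
    | Sum.inl a, Sum.inl b => G.Adj a.1 b.1
    | Sum.inl a, Sum.inr _ => a.1 ∈ I
    | Sum.inr _, Sum.inl b => b.1 ∈ I
    | Sum.inr _, Sum.inr _ => False
  symm := by
    constructor
    rintro (a | a) (b | b) h
    · exact G.adj_symm h
    · exact h
    · exact h
    · exact h
  loopless := by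
    constructor
    rintro (a | a) h
    · exact G.irrefl h
    · exact h

/-- `I ⊆ S` is `F`-forbidding (for the subgraph of `G` induced on `S`):
the induced subgraph plus an apex over `I` contains no member of `F` as a subgraph. -/
def Forbidding {V : Type} (F : Set ((W : Type) × SimpleGraph W)) (G : SimpleGraph V)
    (S I : Finset V) : Prop :=
  ∀ p ∈ F, ¬ ContainsCopy (apexGraph G S I) p

/-- The subgraph of `G` induced on `S` is `(F,k)`-boundary-reducible with boundary `B`,
inside the ambient induced subgraph of `G` on `A` (degrees `deg_G` are measured in `A`). -/
def BoundaryReducibleIn {V : Type} [DecidableEq V] (F : Set ((W : Type) × SimpleGraph W))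
    (k : ℕ) (G : SimpleGraph V) [DecidableRel G.Adj] (A S B : Finset V) : Prop :=
  S ⊆ A ∧ B ⊂ S ∧
  (∀ v ∈ S \ B, ColorableOn G (S \ B)
      (Function.update (fun w => (k : ℤ) - degIn G A w + degIn G (S \ B) w) v 1)) ∧
  (∀ I : Finset V, I ⊆ S \ B → (I.card : ℤ) ≤ (k : ℤ) - 2 → Forbidding F G S I →
    ColorableOn G (S \ B)
      (fun w => (k : ℤ) - degIn G A w + degIn G (S \ B) w - if w ∈ I then 1 else 0))

/-- Weak `(F,k)`-boundary-reducibility, witnessed by the set `Fx = Fix(H)`. -/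
def WeakBoundaryReducibleInWith {V : Type} [DecidableEq V]
    (F : Set ((W : Type) × SimpleGraph W)) (k : ℕ) (G : SimpleGraph V) [DecidableRel G.Adj]
    (A S B Fx : Finset V) : Prop :=
  S ⊆ A ∧ B ⊂ S ∧ Fx.Nonempty ∧ Fx ⊆ S \ B ∧
  (∀ v ∈ Fx, ColorableOn G (S \ B)
      (Function.update (fun w => (k : ℤ) - degIn G A w + degIn G (S \ B) w) v 1)) ∧
  (∀ I : Finset V, I ⊆ S \ B → (I.card : ℤ) ≤ (k : ℤ) - 2 → Forbidding F G S I →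
    ColorableOn G (S \ B)
      (fun w => (k : ℤ) - degIn G A w + degIn G (S \ B) w - if w ∈ I then 1 else 0))

/-- An `(F,k,b)`-resolution of `G`: nested induced subgraphs `G_i` of `G` on the vertex
sets `A i`, where `G_i` is obtained from `G_{i-1}` by deleting `H_i - B_i` for an induced
`(F,k)`-boundary-reducible subgraph `H_i` (on vertex set `S i`) of `G_{i-1}`,
and the last graph `G_M` is itself reducible with empty boundary and has at most `b` vertices. -/
structure Resolution {V : Type} [Fintype V] [DecidableEq V]
    (F : Set ((W : Type) × SimpleGraph W)) (k b : ℕ)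
    (G : SimpleGraph V) [DecidableRel G.Adj] where
  M : ℕ
  S : ℕ → Finset V
  B : ℕ → Finset V
  A : ℕ → Finset V
  hA0 : A 0 = Finset.univ
  hAstep : ∀ i, 1 ≤ i → i ≤ M → A i = A (i - 1) \ (S i \ B i)
  avoid : ∀ p ∈ F, ¬ ContainsCopy G p
  red : ∀ i, 1 ≤ i → i ≤ M → BoundaryReducibleIn F k G (A (i - 1)) (S i) (B i)
  size : ∀ i, 1 ≤ i → i ≤ M → (S i \ B i).card ≤ b
  last : BoundaryReducibleIn F k G (A M) (A M) ∅
  lastsize : (A M).card ≤ b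

/-- A weak `(F,k,b)`-resolution of `G`; `Fx i` is the set `Fix(H_i)` for the `i`-th
reducible subgraph (`1 ≤ i ≤ M`), and `Fx 0` is the `Fix` set of the last graph `G_M`. -/
structure WeakResolution {V : Type} [Fintype V] [DecidableEq V]
    (F : Set ((W : Type) × SimpleGraph W)) (k b : ℕ)
    (G : SimpleGraph V) [DecidableRel G.Adj] where
  M : ℕ
  S : ℕ → Finset V
  B : ℕ → Finset V
  A : ℕ → Finset V
  Fx : ℕ → Finset V
  hA0 : A 0 = Finset.univ
  hAstep : ∀ i, 1 ≤ i → i ≤ M → A i = A (i - 1) \ (S i \ B i)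
  avoid : ∀ p ∈ F, ¬ ContainsCopy G p
  red : ∀ i, 1 ≤ i → i ≤ M → WeakBoundaryReducibleInWith F k G (A (i - 1)) (S i) (B i) (Fx i)
  size : ∀ i, 1 ≤ i → i ≤ M → (S i \ B i).card ≤ b
  last : WeakBoundaryReducibleInWith F k G (A M) (A M) ∅ (Fx 0)
  lastsize : (A M).card ≤ b

/-- `Fix(G)`: the union of the `Fix` sets of the reducible subgraphs of the resolution. -/
def WeakResolution.FixG {V : Type} [Fintype V] [DecidableEq V]
    {F : Set ((W : Type) × SimpleGraph W)} {k b : ℕ}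
    {G : SimpleGraph V} [DecidableRel G.Adj] (R : WeakResolution F k b G) : Finset V :=
  (Finset.range (R.M + 1)).biUnion R.Fx

lemma pair_color {V : Type} [DecidableEq V] (G : SimpleGraph V) (u v : V) (huv : G.Adj u v)
    (T : Finset V) (hT : ∀ x ∈ T, x = u ∨ x = v)
    (L : V → Finset ℕ) (h1 : (L u).Nonempty) (h2 : 2 ≤ (L v).card) :
    ∃ φ : V → ℕ, (∀ x ∈ T, φ x ∈ L x) ∧ ∀ a ∈ T, ∀ b ∈ T, G.Adj a b → φ a ≠ φ b := by
  obtain ⟨cu, hcu⟩ := h1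
  have hne : (L v \ {cu}).Nonempty := by
    rw [← Finset.card_pos]
    have := Finset.le_card_sdiff ({cu} : Finset ℕ) (L v)
    simp at this; omega
  obtain ⟨cv, hcv⟩ := hne
  rw [Finset.mem_sdiff, Finset.mem_singleton] at hcv
  refine ⟨fun x => if x = u then cu else cv, ?_, ?_⟩
  · intro x hx
    rcases hT x hx with rfl | rfl
    · simpa using hcu
    · simp [huv.ne', hcv.1]
  · intro a ha b hb hab
    rcases hT a ha with rfl | rfl <;> rcases hT b hb with rfl | rfl
    · exact absurd rfl hab.ne
    · simpa [huv.ne, huv.ne'] using fun h => hcv.2 h.symm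
    · simpa [huv.ne, huv.ne'] using hcv.2
    · exact absurd rfl hab.ne

lemma diamond_copy {V : Type} [DecidableEq V] (G : SimpleGraph V) (u v w : V)
    (huv : G.Adj u v) (hvw : G.Adj v w) (huw : G.Adj u w) (I : Finset V)
    (hu : u ∈ I) (hv : v ∈ I) :
    ContainsCopy (apexGraph G ({u, v, w} : Finset V) I) ⟨Fin 4, diamondGraph⟩ := by
  have hu' : u ∈ ({u, v, w} : Finset V) := by simp
  have hv' : v ∈ ({u, v, w} : Finset V) := by simp
  have hw' : w ∈ ({u, v, w} : Finset V) := by simp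
  have h1 := huv.ne
  have h2 := hvw.ne
  have h3 := huw.ne
  have hm : Function.Injective
      (![Sum.inl ⟨u, hu'⟩, Sum.inl ⟨v, hv'⟩, Sum.inl ⟨w, hw'⟩, Sum.inr ()] :
        Fin 4 → {x // x ∈ ({u, v, w} : Finset V)} ⊕ Unit) := by
    intro a b hab
    fin_cases a <;> fin_cases b <;> simp_all
  refine ⟨⟨![Sum.inl ⟨u, hu'⟩, Sum.inl ⟨v, hv'⟩, Sum.inl ⟨w, hw'⟩, Sum.inr ()], ?_⟩, hm⟩
  intro a b hab
  fin_cases a <;> fin_cases b <;>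
    simp_all [diamondGraph, apexGraph, SimpleGraph.fromEdgeSet_adj, Sym2.eq_iff] <;>
    first
      | exact huv | exact huv.symm | exact huw | exact huw.symm
      | exact hvw | exact hvw.symm

theorem triangle_reducible {V : Type} [Fintype V] [DecidableEq V]
    (G : SimpleGraph V) [DecidableRel G.Adj] (k : ℕ) (hk : 4 ≤ k)
    (u v w : V) (huv : G.Adj u v) (hvw : G.Adj v w) (huw : G.Adj u w)
    (hdu : G.degree u = k - 1) (hdv : G.degree v = k - 1) :
    BoundaryReducibleIn ({⟨Fin 4, diamondGraph⟩} : Set ((W : Type) × SimpleGraph W)) k G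
      Finset.univ {u, v, w} {w} := by
  classical
  have hne1 := huv.ne
  have hne2 := hvw.ne
  have hne3 := huw.ne
  have hSB : ({u, v, w} : Finset V) \ {w} = {u, v} := by
    ext x
    simp only [Finset.mem_sdiff, Finset.mem_insert, Finset.mem_singleton]
    constructor
    · rintro ⟨h | h | rfl, h2⟩
      exacts [Or.inl h, Or.inr h, absurd rfl h2]
    · rintro (rfl | rfl)
      exacts [⟨Or.inl rfl, hne3⟩, ⟨Or.inr (Or.inl rfl), hne2⟩]
  have hdegIn : ∀ x : V, degIn G Finset.univ x = G.degree x := by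
    intro x
    unfold degIn
    rw [show Finset.univ.filter (fun y => G.Adj x y) = G.neighborFinset x by
      ext y; simp [SimpleGraph.mem_neighborFinset]]
    rfl
  have hdInu : degIn G ({u, v} : Finset V) u = 1 := by
    unfold degIn
    rw [show ({u, v} : Finset V).filter (fun y => G.Adj u y) = {v} by
      ext y
      simp only [Finset.mem_filter, Finset.mem_insert, Finset.mem_singleton]
      constructor
      · rintro ⟨rfl | rfl, h⟩
        exacts [absurd h (G.irrefl), rfl]
      · rintro rfl; exact ⟨Or.inr rfl, huv⟩]
    simp
  have hdInv : degIn G ({u, v} : Finset V) v = 1 := by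
    unfold degIn
    rw [show ({u, v} : Finset V).filter (fun y => G.Adj v y) = {u} by
      ext y
      simp only [Finset.mem_filter, Finset.mem_insert, Finset.mem_singleton]
      constructor
      · rintro ⟨rfl | rfl, h⟩
        exacts [rfl, absurd h (G.irrefl)]
      · rintro rfl; exact ⟨Or.inl rfl, huv.symm⟩]
    simp
  have gval : ∀ x : V, x = u ∨ x = v →
      ((k : ℤ) - degIn G Finset.univ x + degIn G ({u, v} : Finset V) x) = 2 := by
    rintro x (rfl | rfl)
    · rw [hdegIn, hdu, hdInu]
      have : ((k - 1 : ℕ) : ℤ) = (k : ℤ) - 1 := by omega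
      rw [this]; ring
    · rw [hdegIn, hdv, hdInv]
      have : ((k - 1 : ℕ) : ℤ) = (k : ℤ) - 1 := by omega
      rw [this]; ring
  refine ⟨Finset.subset_univ _, ?_, ?_, ?_⟩
  · rw [Finset.ssubset_iff_of_subset (by intro x hx; simp at hx; simp [hx])]
    exact ⟨u, by simp, by simp [hne3]⟩
  · intro v₀ hv₀
    rw [hSB] at hv₀ ⊢
    simp only [Finset.mem_insert, Finset.mem_singleton] at hv₀
    intro L hL
    have hmemu : u ∈ ({u, v} : Finset V) := by simp
    have hmemv : v ∈ ({u, v} : Finset V) := by simp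
    have hT : ∀ x ∈ ({u, v} : Finset V), x = u ∨ x = v := by
      intro x hx; simpa using hx
    rcases hv₀ with rfl | rfl
    · have h1 : (L v₀).Nonempty := by
        have := hL v₀ hmemu
        rw [Function.update_self] at this
        rw [← Finset.card_pos]; omega
      have h2 : 2 ≤ (L v).card := by
        have := hL v hmemv
        rw [Function.update_of_ne hne1.symm, gval v (Or.inr rfl)] at this
        omega
      exact pair_color G v₀ v huv _ hT L h1 h2
    · have h1 : (L v₀).Nonempty := by
        have := hL v₀ hmemv
        rw [Function.update_self] at this
        rw [← Finset.card_pos]; omega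
      have h2 : 2 ≤ (L u).card := by
        have := hL u hmemu
        rw [Function.update_of_ne hne1, gval u (Or.inl rfl)] at this
        omega
      exact pair_color G v₀ u huv.symm _ (fun x hx => (hT x hx).symm) L h1 h2
  · intro I hI hIcard hforb
    rw [hSB] at hI ⊢
    intro L hL
    have hnotboth : ¬(u ∈ I ∧ v ∈ I) := by
      rintro ⟨h1, h2⟩
      exact hforb ⟨Fin 4, diamondGraph⟩ rfl (diamond_copy G u v w huv hvw huw I h1 h2)
    have hmemu : u ∈ ({u, v} : Finset V) := by simp
    have hmemv : v ∈ ({u, v} : Finset V) := by simp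
    have hT : ∀ x ∈ ({u, v} : Finset V), x = u ∨ x = v := by
      intro x hx; simpa using hx
    by_cases hvI : v ∈ I
    · have huI : u ∉ I := fun h => hnotboth ⟨h, hvI⟩
      have h1 : (L v).Nonempty := by
        have := hL v hmemv
        beta_reduce at this
        rw [gval v (Or.inr rfl)] at this
        simp only [if_pos hvI] at this
        rw [← Finset.card_pos]; omega
      have h2 : 2 ≤ (L u).card := by
        have := hL u hmemu
        beta_reduce at this
        rw [gval u (Or.inl rfl)] at this
        simp only [if_neg huI] at this
        omega
      exact pair_color G v u huv.symm _ (fun x hx => (hT x hx).symm) L h1 h2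
    · have h1 : (L u).Nonempty := by
        have := hL u hmemu
        beta_reduce at this
        rw [gval u (Or.inl rfl)] at this
        have h' : ((if u ∈ I then 1 else 0 : ℤ)) ≤ 1 := by split <;> omega
        rw [← Finset.card_pos]; omega
      have h2 : 2 ≤ (L v).card := by
        have := hL v hmemv
        beta_reduce at this
        rw [gval v (Or.inr rfl)] at this
        simp only [if_neg hvI] at this
        omega
      exact pair_color G u v huv _ hT L h1 h2
end

section
/- Let F = {house, K_{2,3}} and let G be a graph containing a 4-cycle v1v2v3v4 with deg_G(v1) = deg_G(v3) = 4 and deg_G(v2) = 5 (v4 of arbitrary degree). Then the subgraph induced by {v1,v2,v3,v4} is (F,5)-boundary-reducible with boundary {v4}. -/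
open Finset

lemma house_copy {V : Type} [DecidableEq V] (G : SimpleGraph V) (S I : Finset V)
    (a b c d : V) (ha : a ∈ S) (hb : b ∈ S) (hc : c ∈ S) (hd : d ∈ S)
    (hab : G.Adj a b) (hbc : G.Adj b c) (hcd : G.Adj c d) (hda : G.Adj d a)
    (hac : a ≠ c) (hbd : b ≠ d) (haI : a ∈ I) (hbI : b ∈ I) :
    ContainsCopy (apexGraph G S I) ⟨Fin 5, houseGraph⟩ := by
  classical
  let f : Fin 5 → ({x // x ∈ S} ⊕ Unit) :=
    ![Sum.inl ⟨a, ha⟩, Sum.inl ⟨b, hb⟩, Sum.inl ⟨c, hc⟩, Sum.inl ⟨d, hd⟩, Sum.inr ()]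
  have hne : a ≠ b := hab.ne
  have hne2 : b ≠ c := hbc.ne
  have hne3 : c ≠ d := hcd.ne
  have hne4 : d ≠ a := hda.ne
  refine ⟨⟨f, ?_⟩, ?_⟩
  · intro x y hxy
    rw [houseGraph, SimpleGraph.fromEdgeSet_adj] at hxy
    simp only [Set.mem_insert_iff, Set.mem_singleton_iff, Sym2.eq_iff] at hxy
    obtain ⟨h1, -⟩ := hxy
    rcases h1 with (⟨rfl,rfl⟩|⟨rfl,rfl⟩)|(⟨rfl,rfl⟩|⟨rfl,rfl⟩)|(⟨rfl,rfl⟩|⟨rfl,rfl⟩)|(⟨rfl,rfl⟩|⟨rfl,rfl⟩)|(⟨rfl,rfl⟩|⟨rfl,rfl⟩)|(⟨rfl,rfl⟩|⟨rfl,rfl⟩) <;>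
      first
      | exact hab | exact hab.symm | exact hbc | exact hbc.symm
      | exact hcd | exact hcd.symm | exact hda | exact hda.symm
      | exact haI | exact hbI
  · intro x y hxy
    replace hxy : f x = f y := hxy
    fin_cases x <;> fin_cases y <;> simp_all [f, Subtype.ext_iff, hne, hne2, hne3, hne4, hac, hbd,
      hne.symm, hne2.symm, hne3.symm, hne4.symm, hac.symm, hbd.symm]

lemma k23_copy {V : Type} [DecidableEq V] (G : SimpleGraph V) (S I : Finset V)
    (a b c d : V) (ha : a ∈ S) (hb : b ∈ S) (hc : c ∈ S) (hd : d ∈ S)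
    (hab : G.Adj a b) (hbc : G.Adj b c) (hcd : G.Adj c d) (hda : G.Adj d a)
    (hac : a ≠ c) (hbd : b ≠ d) (haI : a ∈ I) (hcI : c ∈ I) :
    ContainsCopy (apexGraph G S I) ⟨Fin 2 ⊕ Fin 3, completeBipartiteGraph (Fin 2) (Fin 3)⟩ := by
  classical
  let g1 : Fin 2 → ({x // x ∈ S} ⊕ Unit) := ![Sum.inl ⟨a, ha⟩, Sum.inl ⟨c, hc⟩]
  let g2 : Fin 3 → ({x // x ∈ S} ⊕ Unit) := ![Sum.inl ⟨b, hb⟩, Sum.inl ⟨d, hd⟩, Sum.inr ()]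
  let f : Fin 2 ⊕ Fin 3 → ({x // x ∈ S} ⊕ Unit) := Sum.elim g1 g2
  have hne : a ≠ b := hab.ne
  have hne2 : b ≠ c := hbc.ne
  have hne3 : c ≠ d := hcd.ne
  have hne4 : d ≠ a := hda.ne
  refine ⟨⟨f, ?_⟩, ?_⟩
  · rintro (x | x) (y | y) hxy <;>
      simp only [completeBipartiteGraph_adj, Sum.isLeft_inl, Sum.isRight_inl, Sum.isLeft_inr,
        Sum.isRight_inr] at hxy
    · simp at hxy
    · fin_cases x <;> fin_cases y <;>
        first
        | exact hab | exact hab.symm | exact hbc | exact hbc.symm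
        | exact hcd | exact hcd.symm | exact hda | exact hda.symm
        | exact haI | exact hcI
    · fin_cases x <;> fin_cases y <;>
        first
        | exact hab | exact hab.symm | exact hbc | exact hbc.symm
        | exact hcd | exact hcd.symm | exact hda | exact hda.symm
        | exact haI | exact hcI
    · simp at hxy
  · intro x y hxy
    replace hxy : f x = f y := hxy
    rcases x with x | x <;> rcases y with y | y <;>
      fin_cases x <;> fin_cases y <;>
      simp_all [f, g1, g2, Subtype.ext_iff, hne, hne2, hne3, hne4, hac, hbd,
        hne.symm, hne2.symm, hne3.symm, hne4.symm, hac.symm, hbd.symm]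

lemma pick_colors' (La Lb Lc : Finset ℕ) (ab ac bc : Prop) [Decidable ab] [Decidable ac] [Decidable bc]
    (ha : 1 ≤ La.card)
    (hb : (if ab then 1 else 0) + 1 ≤ Lb.card)
    (hc : (if ac then 1 else 0) + (if bc then 1 else 0) + 1 ≤ Lc.card) :
    ∃ x ∈ La, ∃ y ∈ Lb, ∃ z ∈ Lc, (ab → x ≠ y) ∧ (ac → x ≠ z) ∧ (bc → y ≠ z) := by
  obtain ⟨x, hx⟩ := Finset.card_pos.mp ha
  set s1 : Finset ℕ := if ab then {x} else ∅ with hs1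
  have hcs1 : s1.card ≤ if ab then 1 else 0 := by rw [hs1]; split <;> simp
  have h1 : 0 < (Lb \ s1).card := by
    have := Finset.le_card_sdiff s1 Lb
    split at hcs1 <;> split at hb <;> omega
  obtain ⟨y, hy⟩ := Finset.card_pos.mp h1
  set s2 : Finset ℕ := (if ac then {x} else ∅) ∪ (if bc then {y} else ∅) with hs2
  have hcs2 : s2.card ≤ (if ac then 1 else 0) + (if bc then 1 else 0) := by
    rw [hs2]
    refine le_trans (Finset.card_union_le _ _) ?_
    gcongr <;> split <;> simp
  have h2 : 0 < (Lc \ s2).card := by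
    have := Finset.le_card_sdiff s2 Lc
    omega
  obtain ⟨z, hz⟩ := Finset.card_pos.mp h2
  rw [Finset.mem_sdiff] at hy hz
  refine ⟨x, hx, y, hy.1, z, hz.1, ?_, ?_, ?_⟩
  · intro h hxy; exact hy.2 (by rw [hs1, if_pos h, hxy]; simp)
  · intro h hxz; exact hz.2 (by rw [hs2]; apply Finset.mem_union_left; rw [if_pos h, hxz]; simp)
  · intro h hyz; exact hz.2 (by rw [hs2]; apply Finset.mem_union_right; rw [if_pos h, hyz]; simp)

lemma colorable_three {V : Type} [DecidableEq V] (G : SimpleGraph V) [DecidableRel G.Adj]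
    (a b c : V) (nab : a ≠ b) (nac : a ≠ c) (nbc : b ≠ c)
    (L : V → Finset ℕ)
    (ha : 1 ≤ (L a).card)
    (hb : (if G.Adj a b then 1 else 0) + 1 ≤ (L b).card)
    (hc : (if G.Adj a c then 1 else 0) + (if G.Adj b c then 1 else 0) + 1 ≤ (L c).card) :
    ∃ φ : V → ℕ, (∀ v ∈ ({a, b, c} : Finset V), φ v ∈ L v) ∧
      ∀ u ∈ ({a, b, c} : Finset V), ∀ v ∈ ({a, b, c} : Finset V), G.Adj u v → φ u ≠ φ v := by
  obtain ⟨x, hx, y, hy, z, hz, hxy, hxz, hyz⟩ :=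
    pick_colors' (L a) (L b) (L c) _ _ _ ha hb hc
  set φ : V → ℕ := fun w => if w = a then x else if w = b then y else z with hφ
  have pa : φ a = x := by simp [hφ]
  have pb : φ b = y := by simp [hφ, Ne.symm nab]
  have pc : φ c = z := by simp [hφ, Ne.symm nac, Ne.symm nbc]
  refine ⟨φ, ?_, ?_⟩
  · intro v hv
    simp only [Finset.mem_insert, Finset.mem_singleton] at hv
    rcases hv with rfl | rfl | rfl
    · rw [pa]; exact hx
    · rw [pb]; exact hy
    · rw [pc]; exact hz
  · intro u hu v hv hadj
    simp only [Finset.mem_insert, Finset.mem_singleton] at hu hv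
    rcases hu with rfl | rfl | rfl <;> rcases hv with rfl | rfl | rfl <;>
      first
      | exact (G.irrefl hadj).elim
      | (rw [pa, pb]; exact hxy hadj)
      | (rw [pa, pc]; exact hxz hadj)
      | (rw [pb, pc]; exact hyz hadj)
      | (rw [pb, pa]; exact (hxy hadj.symm).symm)
      | (rw [pc, pa]; exact (hxz hadj.symm).symm)
      | (rw [pc, pb]; exact (hyz hadj.symm).symm)

theorem fourCycle_454_reducible {V : Type} [Fintype V] [DecidableEq V]
    (G : SimpleGraph V) [DecidableRel G.Adj]
    (v1 v2 v3 v4 : V)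
    (h12 : G.Adj v1 v2) (h23 : G.Adj v2 v3) (h34 : G.Adj v3 v4) (h41 : G.Adj v4 v1)
    (h13 : v1 ≠ v3) (h24 : v2 ≠ v4)
    (hd1 : G.degree v1 = 4) (hd2 : G.degree v2 = 5) (hd3 : G.degree v3 = 4) :
    BoundaryReducibleIn
      ({⟨Fin 5, houseGraph⟩, ⟨Fin 2 ⊕ Fin 3, completeBipartiteGraph (Fin 2) (Fin 3)⟩} :
        Set ((W : Type) × SimpleGraph W)) 5 G
      Finset.univ {v1, v2, v3, v4} {v4} := by
  have n12 : v1 ≠ v2 := h12.ne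
  have n23 : v2 ≠ v3 := h23.ne
  have n34 : v3 ≠ v4 := h34.ne
  have n14 : v1 ≠ v4 := h41.ne'
  have hT : ({v1, v2, v3, v4} : Finset V) \ {v4} = {v1, v2, v3} := by
    ext x
    simp only [Finset.mem_sdiff, Finset.mem_insert, Finset.mem_singleton]
    constructor
    · rintro ⟨(rfl | rfl | rfl | rfl), h⟩
      · exact Or.inl rfl
      · exact Or.inr (Or.inl rfl)
      · exact Or.inr (Or.inr rfl)
      · exact absurd rfl h
    · rintro (rfl | rfl | rfl)
      · exact ⟨Or.inl rfl, n14⟩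
      · exact ⟨Or.inr (Or.inl rfl), h24⟩
      · exact ⟨Or.inr (Or.inr (Or.inl rfl)), n34⟩
  have hm1 : v1 ∈ ({v1, v2, v3} : Finset V) := by simp
  have hm2 : v2 ∈ ({v1, v2, v3} : Finset V) := by simp
  have hm3 : v3 ∈ ({v1, v2, v3} : Finset V) := by simp
  set ch : ℕ := if G.Adj v1 v3 then 1 else 0 with hch
  have hch2 : (if G.Adj v3 v1 then 1 else 0) = ch := by
    rw [hch]; by_cases hx : G.Adj v1 v3
    · rw [if_pos hx.symm, if_pos hx]
    · rw [if_neg (fun hh => hx hh.symm), if_neg hx]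
  have hu1 : degIn G Finset.univ v1 = 4 := by
    rw [degIn, ← SimpleGraph.neighborFinset_eq_filter]; exact hd1
  have hu2 : degIn G Finset.univ v2 = 5 := by
    rw [degIn, ← SimpleGraph.neighborFinset_eq_filter]; exact hd2
  have hu3 : degIn G Finset.univ v3 = 4 := by
    rw [degIn, ← SimpleGraph.neighborFinset_eq_filter]; exact hd3
  have dI2 : 2 ≤ degIn G {v1, v2, v3} v2 := by
    have hsub : ({v1, v3} : Finset V) ⊆ Finset.filter (fun w => G.Adj v2 w) {v1, v2, v3} := by
      intro x hx
      simp only [Finset.mem_insert, Finset.mem_singleton] at hx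
      rcases hx with rfl | rfl <;> simp [h12.symm, h23]
    calc 2 = ({v1, v3} : Finset V).card := by
            rw [Finset.card_insert_of_notMem (by simp [h13]), Finset.card_singleton]
      _ ≤ _ := Finset.card_le_card hsub
  have dI1 : 1 + ch ≤ degIn G {v1, v2, v3} v1 := by
    by_cases hx : G.Adj v1 v3
    · have hsub : ({v2, v3} : Finset V) ⊆ Finset.filter (fun w => G.Adj v1 w) {v1, v2, v3} := by
        intro x hxx
        simp only [Finset.mem_insert, Finset.mem_singleton] at hxx
        rcases hxx with rfl | rfl <;> simp [h12, hx]
      have : ({v2, v3} : Finset V).card = 2 := by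
        rw [Finset.card_insert_of_notMem (by simp [n23]), Finset.card_singleton]
      rw [hch, if_pos hx]
      calc 1 + 1 = 2 := rfl
        _ = _ := this.symm
        _ ≤ _ := Finset.card_le_card hsub
    · have hsub : ({v2} : Finset V) ⊆ Finset.filter (fun w => G.Adj v1 w) {v1, v2, v3} := by
        intro x hxx
        simp only [Finset.mem_singleton] at hxx
        subst hxx; simp [h12]
      rw [hch, if_neg hx]
      have hcard := Finset.card_le_card hsub
      simp only [Finset.card_singleton] at hcard
      show 1 + 0 ≤ (Finset.filter (fun w => G.Adj v1 w) {v1, v2, v3}).card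
      omega
  have dI3 : 1 + ch ≤ degIn G {v1, v2, v3} v3 := by
    by_cases hx : G.Adj v1 v3
    · have hsub : ({v1, v2} : Finset V) ⊆ Finset.filter (fun w => G.Adj v3 w) {v1, v2, v3} := by
        intro x hxx
        simp only [Finset.mem_insert, Finset.mem_singleton] at hxx
        rcases hxx with rfl | rfl <;> simp [hx.symm, h23.symm]
      have : ({v1, v2} : Finset V).card = 2 := by
        rw [Finset.card_insert_of_notMem (by simp [n12]), Finset.card_singleton]
      rw [hch, if_pos hx]
      calc 1 + 1 = 2 := rfl
        _ = _ := this.symm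
        _ ≤ _ := Finset.card_le_card hsub
    · have hsub : ({v2} : Finset V) ⊆ Finset.filter (fun w => G.Adj v3 w) {v1, v2, v3} := by
        intro x hxx
        simp only [Finset.mem_singleton] at hxx
        subst hxx; simp [h23.symm]
      rw [hch, if_neg hx]
      have hcard := Finset.card_le_card hsub
      simp only [Finset.card_singleton] at hcard
      show 1 + 0 ≤ (Finset.filter (fun w => G.Adj v3 w) {v1, v2, v3}).card
      omega
  have hset2 : ({v2, v1, v3} : Finset V) = {v1, v2, v3} := by
    ext x; simp only [Finset.mem_insert, Finset.mem_singleton]; tauto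
  have hset3 : ({v3, v2, v1} : Finset V) = {v1, v2, v3} := by
    ext x; simp only [Finset.mem_insert, Finset.mem_singleton]; tauto
  refine ⟨Finset.subset_univ _, ?_, ?_, ?_⟩
  · rw [Finset.ssubset_iff_subset_ne]
    constructor
    · intro x hx; simp only [Finset.mem_singleton] at hx; subst hx; simp
    · intro h
      have : v1 ∈ ({v4} : Finset V) := by rw [h]; simp
      simp only [Finset.mem_singleton] at this
      exact n14 this
  · -- FIX
    intro v hv
    rw [hT] at hv ⊢
    intro L hL
    simp only [Finset.mem_insert, Finset.mem_singleton] at hv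
    rcases hv with rfl | rfl | rfl
    · have b1 : 1 ≤ (L v).card := by
        have h := hL v hm1; rw [Function.update_self] at h; omega
      have b2 : 2 ≤ (L v2).card := by
        have h := hL v2 hm2
        simp only [Function.update_of_ne n12.symm] at h
        omega
      have b3 : 2 + ch ≤ (L v3).card := by
        have h := hL v3 hm3
        simp only [Function.update_of_ne h13.symm] at h
        omega
      exact colorable_three G v v2 v3 n12 h13 n23 L b1
        (by rw [if_pos h12]; omega) (by rw [if_pos h23, ← hch]; omega)
    · rw [← hset2]
      have b1 : 1 ≤ (L v).card := by
        have h := hL v hm2; rw [Function.update_self] at h; omega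
      have b2 : 2 + ch ≤ (L v1).card := by
        have h := hL v1 hm1
        simp only [Function.update_of_ne n12] at h
        omega
      have b3 : 2 + ch ≤ (L v3).card := by
        have h := hL v3 hm3
        simp only [Function.update_of_ne n23.symm] at h
        omega
      exact colorable_three G v v1 v3 n12.symm n23 h13 L b1
        (by rw [if_pos h12.symm]; omega) (by rw [if_pos h23, ← hch]; omega)
    · rw [← hset3]
      have b1 : 1 ≤ (L v).card := by
        have h := hL v hm3; rw [Function.update_self] at h; omega
      have b2 : 2 ≤ (L v2).card := by
        have h := hL v2 hm2
        simp only [Function.update_of_ne n23] at h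
        omega
      have b3 : 2 + ch ≤ (L v1).card := by
        have h := hL v1 hm1
        simp only [Function.update_of_ne h13] at h
        omega
      exact colorable_three G v v2 v1 n23.symm h13.symm n12.symm L b1
        (by rw [if_pos h23.symm]; omega) (by rw [if_pos h12.symm, hch2]; omega)
  · -- FORB
    intro I hI hIcard hForb
    rw [hT] at hI ⊢
    have hhouse : ¬ ContainsCopy (apexGraph G {v1, v2, v3, v4} I) ⟨Fin 5, houseGraph⟩ :=
      hForb _ (Set.mem_insert _ _)
    have hk23 : ¬ ContainsCopy (apexGraph G {v1, v2, v3, v4} I)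
        ⟨Fin 2 ⊕ Fin 3, completeBipartiteGraph (Fin 2) (Fin 3)⟩ :=
      hForb _ (Set.mem_insert_of_mem _ rfl)
    have hno12 : ¬(v1 ∈ I ∧ v2 ∈ I) := fun ⟨hA, hB⟩ =>
      hhouse (house_copy G _ I v1 v2 v3 v4 (by simp) (by simp) (by simp) (by simp)
        h12 h23 h34 h41 h13 h24 hA hB)
    have hno23 : ¬(v2 ∈ I ∧ v3 ∈ I) := fun ⟨hA, hB⟩ =>
      hhouse (house_copy G _ I v2 v3 v4 v1 (by simp) (by simp) (by simp) (by simp)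
        h23 h34 h41 h12 h24 h13.symm hA hB)
    have hno13 : ¬(v1 ∈ I ∧ v3 ∈ I) := fun ⟨hA, hB⟩ =>
      hk23 (k23_copy G _ I v1 v2 v3 v4 (by simp) (by simp) (by simp) (by simp)
        h12 h23 h34 h41 h13 h24 hA hB)
    intro L hL
    have g1 := hL v1 hm1
    have g2 := hL v2 hm2
    have g3 := hL v3 hm3
    by_cases i1 : v1 ∈ I <;> by_cases i2 : v2 ∈ I <;> by_cases i3 : v3 ∈ I
    · exact absurd ⟨i1, i2⟩ hno12
    · exact absurd ⟨i1, i2⟩ hno12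
    · exact absurd ⟨i1, i3⟩ hno13
    · -- only v1 ∈ I : order (v1, v2, v3)
      simp only [if_pos i1] at g1; simp only [if_neg i2] at g2; simp only [if_neg i3] at g3
      exact colorable_three G v1 v2 v3 n12 h13 n23 L (by omega)
        (by rw [if_pos h12]; omega) (by rw [if_pos h23, ← hch]; omega)
    · exact absurd ⟨i2, i3⟩ hno23
    · -- only v2 ∈ I : order (v2, v1, v3)
      simp only [if_neg i1] at g1; simp only [if_pos i2] at g2; simp only [if_neg i3] at g3
      rw [← hset2]
      exact colorable_three G v2 v1 v3 n12.symm n23 h13 L (by omega)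
        (by rw [if_pos h12.symm]; omega) (by rw [if_pos h23, ← hch]; omega)
    · -- only v3 ∈ I : order (v3, v2, v1)
      simp only [if_neg i1] at g1; simp only [if_neg i2] at g2; simp only [if_pos i3] at g3
      rw [← hset3]
      exact colorable_three G v3 v2 v1 n23.symm h13.symm n12.symm L (by omega)
        (by rw [if_pos h23.symm]; omega) (by rw [if_pos h12.symm, hch2]; omega)
    · -- none : order (v1, v2, v3)
      simp only [if_neg i1] at g1; simp only [if_neg i2] at g2; simp only [if_neg i3] at g3
      exact colorable_three G v1 v2 v3 n12 h13 n23 L (by omega)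
        (by rw [if_pos h12]; omega) (by rw [if_pos h23, ← hch]; omega)
end
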